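/- Two subgroups J and K of G are 𝒪-inseparable if and only if for every L ∈ Sub^𝒪(G), the number of J-fixed points of G/L equals the number of K-fixed points of G/L, i.e., |(G/L)^J| = |(G/L)^K|. -/

import Mathlib

/-- A transfer system on a group `G`: a partial order `rel` on subgroups refining the
subgroup relation, closed under conjugation and restriction. -/
structure TransferSystem (G : Type*) [Group G] where
  rel : Subgroup G → Subgroup G → Prop
  le_of_rel : ∀ {K H : Subgroup G}, rel K H → K ≤ H
  refl : ∀ H : Subgroup G, rel H H
  trans : ∀ {J K H : Subgroup G}, rel J K → rel K H → rel J H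
  antisymm : ∀ {K H : Subgroup G}, rel K H → rel H K → K = H
  conj : ∀ (g : G) {K H : Subgroup G}, rel K H →
    rel (K.map (MulAut.conj g).toMonoidHom) (H.map (MulAut.conj g).toMonoidHom)
  restrict : ∀ {K H L : Subgroup G}, rel K H → L ≤ H → rel (K ⊓ L) L

/-- Conjugate subgroup `gKg⁻¹`. -/
def conjSub {G : Type*} [Group G] (g : G) (K : Subgroup G) : Subgroup G :=
  K.map (MulAut.conj g).toMonoidHom

/-- `H_𝒪(J)`: the minimal subgroup containing `J` which transfers to `G` (the top subgroup). -/
noncomputable def HO {G : Type*} [Group G] (O : TransferSystem G) (J : Subgroup G) : Subgroup G :=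
  sInf {H : Subgroup G | O.rel H ⊤ ∧ J ≤ H}

/-- `J ∈ [H]^𝒪`: the inseparability class of `H`, i.e. `H_𝒪(J)` is conjugate to `H`. -/
def inClass {G : Type*} [Group G] (O : TransferSystem G) (H J : Subgroup G) : Prop :=
  ∃ g : G, conjSub g (HO O J) = H

/-- `J` and `K` are 𝒪-inseparable: `H_𝒪(J)` and `H_𝒪(K)` are conjugate. -/
def TSInseparable {G : Type*} [Group G] (O : TransferSystem G) (J K : Subgroup G) : Prop :=
  ∃ g : G, conjSub g (HO O J) = HO O K


section Aux

variable {G : Type*} [Group G]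

lemma mem_conjSub {g x : G} {L : Subgroup G} : x ∈ conjSub g L ↔ g⁻¹ * x * g ∈ L := by
  rw [conjSub, Subgroup.mem_map_equiv]
  simp [mul_assoc]

lemma conjSub_top (g : G) : conjSub g (⊤ : Subgroup G) = ⊤ := by
  ext x; simp [mem_conjSub]

lemma conjSub_one (L : Subgroup G) : conjSub 1 L = L := by
  ext x; simp [mem_conjSub]

lemma card_conjSub (g : G) (L : Subgroup G) : Nat.card (conjSub g L) = Nat.card L :=
  (Nat.card_congr (Subgroup.equivMapOfInjective L _ (MulAut.conj g).injective).toEquiv).symm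

lemma mem_fixedPoints_quot_iff (J L : Subgroup G) (g : G) :
    ((g : G ⧸ L) ∈ MulAction.fixedPoints J (G ⧸ L)) ↔ J ≤ conjSub g L := by
  constructor
  · intro h j hj
    have := h ⟨j, hj⟩
    change (j • (g : G ⧸ L)) = g at this
    rw [MulAction.Quotient.smul_mk, QuotientGroup.eq] at this
    rw [mem_conjSub]
    simpa [mul_assoc] using L.inv_mem this
  · intro h x
    obtain ⟨j, hj⟩ := x
    have hm := h hj
    rw [mem_conjSub] at hm
    change (j • (g : G ⧸ L)) = g
    rw [MulAction.Quotient.smul_mk, QuotientGroup.eq]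
    simpa [mul_assoc] using L.inv_mem hm

lemma HO_mem [Finite G] (O : TransferSystem G) (J : Subgroup G) :
    O.rel (HO O J) ⊤ ∧ J ≤ HO O J := by
  set S := {H : Subgroup G | O.rel H ⊤ ∧ J ≤ H} with hS
  have htop : (⊤ : Subgroup G) ∈ S := ⟨O.refl ⊤, le_top⟩
  obtain ⟨M, hM, hmin⟩ : ∃ M ∈ S, ∀ H ∈ S, id H ≤ id M → id M = id H := by
    obtain ⟨M, hM, hmin⟩ := Set.Finite.exists_minimalFor id S (Set.toFinite S) ⟨⊤, htop⟩
    exact ⟨M, hM, fun H hH h => le_antisymm (hmin hH h) h⟩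
  have key : ∀ H ∈ S, M ≤ H := by
    intro H hH
    have h1 : M ⊓ H ∈ S := by
      refine ⟨O.trans (O.restrict hM.1 (le_top : H ≤ ⊤)) hH.1, le_inf hM.2 hH.2⟩
    have := hmin (M ⊓ H) h1 inf_le_left
    simp only [id] at this
    rw [this]
    exact inf_le_right
  have hHO : HO O J = M := le_antisymm (sInf_le hM) (le_sInf key)
  rw [hHO]
  exact hM

lemma fixedPoints_HO_eq [Finite G] (O : TransferSystem G) (J L : Subgroup G) (hL : O.rel L ⊤) :
    MulAction.fixedPoints J (G ⧸ L) = MulAction.fixedPoints (HO O J) (G ⧸ L) := by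
  ext x
  induction x using QuotientGroup.induction_on with
  | H g =>
    rw [mem_fixedPoints_quot_iff, mem_fixedPoints_quot_iff]
    constructor
    · intro h
      have h2 := O.conj g hL
      rw [show (⊤ : Subgroup G).map (MulAut.conj g).toMonoidHom = ⊤ from conjSub_top g] at h2
      exact sInf_le ⟨h2, h⟩
    · intro h
      exact (HO_mem O J).2.trans h

lemma card_fixedPoints_conj (g : G) (A L : Subgroup G) :
    Nat.card (MulAction.fixedPoints (conjSub g A) (G ⧸ L)) =
      Nat.card (MulAction.fixedPoints A (G ⧸ L)) := by
  refine Nat.card_congr ⟨fun x => ⟨g⁻¹ • x.1, ?_⟩, fun y => ⟨g • y.1, ?_⟩, ?_, ?_⟩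
  · intro a
    obtain ⟨a, ha⟩ := a
    have h1 : g * a * g⁻¹ ∈ conjSub g A := by rw [mem_conjSub]; simpa [mul_assoc] using ha
    have := x.2 ⟨g * a * g⁻¹, h1⟩
    change ((g * a * g⁻¹) • x.1) = x.1 at this
    change (a • g⁻¹ • x.1) = g⁻¹ • x.1
    calc (a : G) • g⁻¹ • x.1 = g⁻¹ • ((g * a * g⁻¹) • x.1) := by
          rw [smul_smul, smul_smul]; group
      _ = g⁻¹ • x.1 := by rw [this]
  · intro a
    obtain ⟨a, ha⟩ := a
    rw [mem_conjSub] at ha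
    have := y.2 ⟨g⁻¹ * a * g, ha⟩
    change ((g⁻¹ * a * g) • y.1) = y.1 at this
    change (a • g • y.1) = g • y.1
    calc (a : G) • g • y.1 = g • ((g⁻¹ * a * g) • y.1) := by
          rw [smul_smul, smul_smul]; group
      _ = g • y.1 := by rw [this]
  · intro x; ext1; simp
  · intro y; ext1; simp

end Aux

/-- `J` and `K` are 𝒪-inseparable iff they have the same number of fixed points on the coset
space for every member of `Sub^𝒪(G)`. -/
theorem inseparable_iff_fixedPoints_card_eq {G : Type*} [Group G] [Finite G]
    (O : TransferSystem G) (J K : Subgroup G) :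
    TSInseparable O J K ↔
      ∀ L : Subgroup G, O.rel L ⊤ →
        Nat.card (MulAction.fixedPoints J (G ⧸ L)) =
          Nat.card (MulAction.fixedPoints K (G ⧸ L)) := by
  constructor
  · rintro ⟨g, hg⟩ L hL
    rw [fixedPoints_HO_eq O J L hL, fixedPoints_HO_eq O K L hL, ← hg, card_fixedPoints_conj]
  · intro h
    have hA := HO_mem O J
    have hB := HO_mem O K
    have main : ∀ J' K' : Subgroup G,
        O.rel (HO O J') ⊤ →
        Nat.card (MulAction.fixedPoints K' (G ⧸ (HO O J'))) =
          Nat.card (MulAction.fixedPoints J' (G ⧸ (HO O J'))) →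
        ∃ g : G, HO O K' ≤ conjSub g (HO O J') := by
      intro J' K' hJ' hcard
      have h1 : ((1 : G) : G ⧸ (HO O J')) ∈
          MulAction.fixedPoints (HO O J') (G ⧸ (HO O J')) := by
        rw [mem_fixedPoints_quot_iff, conjSub_one]
      have h2 : Nat.card (MulAction.fixedPoints (HO O K') (G ⧸ (HO O J'))) ≠ 0 := by
        rw [← fixedPoints_HO_eq O K' _ hJ', hcard, fixedPoints_HO_eq O J' _ hJ']
        exact Nat.card_ne_zero.mpr ⟨⟨_, h1⟩, inferInstance⟩
      obtain ⟨⟨x, hx⟩⟩ := Nat.card_ne_zero.mp h2 |>.1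
      obtain ⟨g, rfl⟩ := QuotientGroup.mk_surjective x
      rw [mem_fixedPoints_quot_iff] at hx
      exact ⟨g, hx⟩
    obtain ⟨g, hg⟩ := main J K hA.1 (h _ hA.1).symm
    obtain ⟨g', hg'⟩ := main K J hB.1 (h _ hB.1)
    have hcard : Nat.card (HO O J) = Nat.card (HO O K) := by
      have c1 : Nat.card (HO O K) ≤ Nat.card (HO O J) := by
        have := Subgroup.card_le_of_le hg
        rwa [card_conjSub] at this
      have c2 : Nat.card (HO O J) ≤ Nat.card (HO O K) := by
        have := Subgroup.card_le_of_le hg'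
        rwa [card_conjSub] at this
      omega
    refine ⟨g, ?_⟩
    exact (Subgroup.eq_of_le_of_card_ge hg (by rw [card_conjSub, hcard])).symm
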